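/- If N is a graded 2-absorbing coprimary R-submodule of a graded R-module M, then Grad(Ann_R(N)) is a graded 2-absorbing ideal of R. -/

import Mathlib

open DirectSum Pointwise

variable {G : Type} [AddGroup G] [DecidableEq G]
variable {R : Type} [CommRing R] (𝒜 : G → AddSubgroup R) [GradedRing 𝒜]
variable {M : Type} [AddCommGroup M] [Module R M] (ℳ : G → AddSubgroup M)
  [SetLike.GradedSMul 𝒜 ℳ] [DirectSum.Decomposition ℳ]

/-- A submodule is graded if it contains every homogeneous component of each of
its elements. -/
def IsGradedSubmodule (N : Submodule R M) : Prop :=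
  ∀ (g : G) (m : M), m ∈ N → (DirectSum.decompose ℳ m g : M) ∈ N

/-- The graded radical of an ideal: all `r` such that for each `g` some positive
power of the degree-`g` component of `r` lies in `P`. -/
def gradRad (P : Ideal R) : Set R :=
  {r : R | ∀ g : G, ∃ n : ℕ, 0 < n ∧ ((DirectSum.decompose 𝒜 r g : R)) ^ n ∈ P}

/-- Graded 2-absorbing coprimary submodule. -/
def IsGr2AbsCoprimary (N : Submodule R M) : Prop :=
  N ≠ ⊥ ∧ IsGradedSubmodule ℳ N ∧
  ∀ x y : R, (∃ g, x ∈ 𝒜 g) → (∃ g, y ∈ 𝒜 g) →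
    ∀ K : Submodule R M, IsGradedSubmodule ℳ K →
      (∀ m ∈ N, (x * y) • m ∈ K) →
      x ∈ gradRad 𝒜 (K.colon N) ∨ y ∈ gradRad 𝒜 (K.colon N) ∨ x * y ∈ N.annihilator

/-- Graded 2-absorbing primary ideal. -/
def IsGr2AbsPrimaryIdeal (P : Ideal R) : Prop :=
  P ≠ ⊤ ∧ (∀ (g : G) (r : R), r ∈ P → (DirectSum.decompose 𝒜 r g : R) ∈ P) ∧
  ∀ a b c : R, (∃ g, a ∈ 𝒜 g) → (∃ g, b ∈ 𝒜 g) → (∃ g, c ∈ 𝒜 g) →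
    a * b * c ∈ P → a * b ∈ P ∨ a * c ∈ gradRad 𝒜 P ∨ b * c ∈ gradRad 𝒜 P

lemma mem_gradRad_iff (P : Ideal R) (r : R) :
    r ∈ gradRad 𝒜 P ↔ ∀ g : G, (DirectSum.decompose 𝒜 r g : R) ∈ P.radical := by
  constructor
  · intro h g
    obtain ⟨n, _, hn⟩ := h g
    exact ⟨n, hn⟩
  · intro h g
    obtain ⟨n, hn⟩ := h g
    exact ⟨n + 1, Nat.succ_pos n, by rw [pow_succ]; exact Ideal.mul_mem_right _ _ hn⟩

lemma homog_mem_gradRad_iff (P : Ideal R) {r : R} {g : G} (hr : r ∈ 𝒜 g) :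
    r ∈ gradRad 𝒜 P ↔ r ∈ P.radical := by
  rw [mem_gradRad_iff]
  constructor
  · intro h
    have := h g
    rwa [DirectSum.decompose_of_mem_same 𝒜 hr] at this
  · intro h g'
    by_cases hg : g = g'
    · subst hg; rwa [DirectSum.decompose_of_mem_same 𝒜 hr]
    · rw [DirectSum.decompose_of_mem_ne 𝒜 hr hg]
      exact P.radical.zero_mem

lemma decompose_smul_of_mem {a : R} {i : G} (ha : a ∈ 𝒜 i) (x : M) (j : G) :
    (DirectSum.decompose ℳ (a • x) (i + j) : M) = a • (DirectSum.decompose ℳ x j : M) := by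
  induction x using DirectSum.Decomposition.inductionOn ℳ with
  | zero => simp
  | @homogeneous h y =>
      have hy : (y : M) ∈ ℳ h := y.2
      have hay : a • (y : M) ∈ ℳ (i + h) := SetLike.GradedSMul.smul_mem ha hy
      by_cases hj : j = h
      · subst hj
        rw [DirectSum.decompose_of_mem_same ℳ hay, DirectSum.decompose_of_mem_same ℳ hy]
      · rw [DirectSum.decompose_of_mem_ne ℳ hay (by
            intro hc
            exact hj (by
              have := add_left_cancel ((hc.symm : i + j = i + h))
              exact this)), DirectSum.decompose_of_mem_ne ℳ hy (fun hc => hj hc.symm),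
          smul_zero]
  | add x x' hx hx' =>
      rw [smul_add, DirectSum.decompose_add, DirectSum.decompose_add]
      push_cast [DirectSum.add_apply]
      rw [hx, hx', smul_add]

/-- `gradRad` of an ideal, bundled as an ideal. -/
def gradRadIdeal (P : Ideal R) : Ideal R where
  carrier := gradRad 𝒜 P
  zero_mem' := by
    rw [mem_gradRad_iff]
    intro g
    simp only [DirectSum.decompose_zero]
    simpa using P.radical.zero_mem
  add_mem' := by
    intro a b ha hb
    rw [mem_gradRad_iff] at ha hb ⊢
    intro g
    rw [DirectSum.decompose_add]
    push_cast [DirectSum.add_apply]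
    exact Ideal.add_mem _ (ha g) (hb g)
  smul_mem' := by
    intro c r hr
    rw [smul_eq_mul]
    rw [mem_gradRad_iff] at hr
    have : ∀ g : G, (DirectSum.decompose 𝒜 (c * r) g : R) ∈ P.radical := by
      induction c using DirectSum.Decomposition.inductionOn 𝒜 with
      | zero => intro g; simpa using P.radical.zero_mem
      | @homogeneous i a =>
          intro g
          have h2 := DirectSum.coe_decompose_mul_add_of_left_mem 𝒜 (b := r) (j := -i + g) a.2
          rw [add_neg_cancel_left] at h2
          rw [h2]
          exact Ideal.mul_mem_left _ _ (hr _)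
      | add c c' hc hc' =>
          intro g
          rw [add_mul, DirectSum.decompose_add]
          push_cast [DirectSum.add_apply]
          exact Ideal.add_mem _ (hc g) (hc' g)
    rw [mem_gradRad_iff]
    exact this

lemma mem_gradRadIdeal {P : Ideal R} {r : R} :
    r ∈ gradRadIdeal 𝒜 P ↔ r ∈ gradRad 𝒜 P := Iff.rfl

theorem stmt_2 (N : Submodule R M) (hN : IsGr2AbsCoprimary 𝒜 ℳ N) :
    ∃ Q : Ideal R, (Q : Set R) = gradRad 𝒜 N.annihilator ∧ Q ≠ ⊤ ∧
      (∀ (g : G) (r : R), r ∈ Q → (DirectSum.decompose 𝒜 r g : R) ∈ Q) ∧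
      ∀ a b c : R, (∃ g, a ∈ 𝒜 g) → (∃ g, b ∈ 𝒜 g) → (∃ g, c ∈ 𝒜 g) →
        a * b * c ∈ Q → a * b ∈ Q ∨ a * c ∈ Q ∨ b * c ∈ Q := by
  obtain ⟨hNbot, hNgr, hmain⟩ := hN
  refine ⟨gradRadIdeal 𝒜 N.annihilator, rfl, ?_, ?_, ?_⟩
  · -- properness
    intro htop
    have h1 : (1 : R) ∈ gradRadIdeal 𝒜 N.annihilator := htop ▸ Submodule.mem_top
    rw [mem_gradRadIdeal, homog_mem_gradRad_iff 𝒜 _ (SetLike.one_mem_graded 𝒜)] at h1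
    obtain ⟨n, hn⟩ := h1
    rw [one_pow, Submodule.mem_annihilator] at hn
    apply hNbot
    rw [eq_bot_iff]
    intro m hm
    simpa using hn m hm
  · -- gradedness
    intro g r hr
    rw [mem_gradRadIdeal, mem_gradRad_iff] at hr
    rw [mem_gradRadIdeal,
      homog_mem_gradRad_iff 𝒜 _ (SetLike.coe_mem (DirectSum.decompose 𝒜 r g))]
    exact hr g
  · -- 2-absorbing
    rintro a b c ⟨ga, hga⟩ ⟨gb, hgb⟩ ⟨gc, hgc⟩ habc
    have habcm : a * b * c ∈ 𝒜 (ga + gb + gc) :=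
      SetLike.mul_mem_graded (SetLike.mul_mem_graded hga hgb) hgc
    rw [mem_gradRadIdeal, homog_mem_gradRad_iff 𝒜 _ habcm] at habc
    obtain ⟨n, hn⟩ := habc
    set m : ℕ := n + 1 with hm
    have hnm : (a * b * c) ^ m ∈ N.annihilator := by
      rw [hm, pow_succ']
      exact Ideal.mul_mem_left _ _ hn
    -- the kernel of multiplication by c ^ m
    set K : Submodule R M := LinearMap.ker ((LinearMap.lsmul R M) (c ^ m)) with hK
    have hmemK : ∀ x : M, x ∈ K ↔ (c ^ m) • x = 0 := by
      intro x
      rw [hK, LinearMap.mem_ker, LinearMap.lsmul_apply]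
    have hcm : c ^ m ∈ 𝒜 (m • gc) := SetLike.pow_mem_graded m hgc
    have hKgr : IsGradedSubmodule ℳ K := by
      intro g x hx
      rw [hmemK] at hx ⊢
      have h2 := decompose_smul_of_mem 𝒜 ℳ hcm x g
      rw [hx, DirectSum.decompose_zero] at h2
      simpa using h2.symm
    have hsub : ∀ x ∈ N, (a ^ m * b ^ m) • x ∈ K := by
      intro x hx
      rw [hmemK, smul_smul]
      have : c ^ m * (a ^ m * b ^ m) = (a * b * c) ^ m := by ring
      rw [this]
      exact (Submodule.mem_annihilator.mp hnm) x hx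
    have ham : ∃ g, a ^ m ∈ 𝒜 g := ⟨m • ga, SetLike.pow_mem_graded m hga⟩
    have hbm : ∃ g, b ^ m ∈ 𝒜 g := ⟨m • gb, SetLike.pow_mem_graded m hgb⟩
    rcases hmain (a ^ m) (b ^ m) ham hbm K hKgr hsub with h | h | h
    · -- a ∈ gradRad(K : N) ⟹ a*c ∈ Q
      refine Or.inr (Or.inl ?_)
      rw [homog_mem_gradRad_iff 𝒜 _ (SetLike.pow_mem_graded m hga)] at h
      obtain ⟨k, hk⟩ := h
      rw [Submodule.mem_colon] at hk
      have hann : c ^ m * (a ^ m) ^ k ∈ N.annihilator := by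
        rw [Submodule.mem_annihilator]
        intro p hp
        rw [mul_smul]
        exact (hmemK _).mp (hk p hp)
      rw [mem_gradRadIdeal, homog_mem_gradRad_iff 𝒜 _ (SetLike.mul_mem_graded hga hgc)]
      refine ⟨m * k + m, ?_⟩
      have : (a * c) ^ (m * k + m) = (c ^ m * (a ^ m) ^ k) * (a ^ m * c ^ (m * k)) := by ring
      rw [this]
      exact Ideal.mul_mem_right _ _ hann
    · -- b ∈ gradRad(K : N) ⟹ b*c ∈ Q
      refine Or.inr (Or.inr ?_)
      rw [homog_mem_gradRad_iff 𝒜 _ (SetLike.pow_mem_graded m hgb)] at h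
      obtain ⟨k, hk⟩ := h
      rw [Submodule.mem_colon] at hk
      have hann : c ^ m * (b ^ m) ^ k ∈ N.annihilator := by
        rw [Submodule.mem_annihilator]
        intro p hp
        rw [mul_smul]
        exact (hmemK _).mp (hk p hp)
      rw [mem_gradRadIdeal, homog_mem_gradRad_iff 𝒜 _ (SetLike.mul_mem_graded hgb hgc)]
      refine ⟨m * k + m, ?_⟩
      have : (b * c) ^ (m * k + m) = (c ^ m * (b ^ m) ^ k) * (b ^ m * c ^ (m * k)) := by ring
      rw [this]
      exact Ideal.mul_mem_right _ _ hann
    · -- a^m b^m ∈ Ann N ⟹ a*b ∈ Q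
      refine Or.inl ?_
      rw [mem_gradRadIdeal, homog_mem_gradRad_iff 𝒜 _ (SetLike.mul_mem_graded hga hgb)]
      exact ⟨m, by rw [mul_pow]; exact h⟩
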